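/- Let Λ be an Artin algebra with r² = 0 and finite global dimension. Then for every simple Λ-module S, Ext¹_Λ(S, S) = 0. -/

import Mathlib

open CategoryTheory

section ARPrelude

variable (Λ : Type) [Ring Λ]

/-- The Jacobson radical of `Λ` squares to zero. -/
def RadicalSquareZero : Prop :=
  ∀ a ∈ Ideal.jacobson (⊥ : Ideal Λ), ∀ b ∈ Ideal.jacobson (⊥ : Ideal Λ), a * b = 0

section ModDefs

variable (M : Type) [AddCommGroup M] [Module Λ M]

/-- The submodule `rM` of `M`, where `r` is the Jacobson radical of `Λ`. -/
def radSub : Submodule Λ M :=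
  Submodule.span Λ {x : M | ∃ a ∈ Ideal.jacobson (⊥ : Ideal Λ), ∃ m : M, x = a • m}

/-- `M` is an indecomposable (nonzero) module. -/
def IsIndec : Prop :=
  Nontrivial M ∧ ∀ N₁ N₂ : Submodule Λ M, IsCompl N₁ N₂ → N₁ = ⊥ ∨ N₂ = ⊥

/-- The socle of `M`: the sum of all simple submodules. -/
def socle : Submodule Λ M :=
  sSup {N : Submodule Λ M | IsSimpleModule Λ ↥N}

end ModDefs

/-- `f : P → M` is a projective cover: `P` projective, `f` a superfluous epimorphism. -/
structure IsProjCover {P M : Type} [AddCommGroup P] [Module Λ P] [AddCommGroup M] [Module Λ M]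
    (f : P →ₗ[Λ] M) : Prop where
  proj : Module.Projective Λ P
  surj : Function.Surjective f
  superfluous : ∀ N : Submodule Λ P, N ⊔ LinearMap.ker f = ⊤ → N = ⊤

/-- `0 → A → E → C → 0` (given by `f`, `g`) is an almost split (Auslander–Reiten) sequence. -/
structure IsAlmostSplitSeq {A E C : Type} [AddCommGroup A] [Module Λ A]
    [AddCommGroup E] [Module Λ E] [AddCommGroup C] [Module Λ C]
    (f : A →ₗ[Λ] E) (g : E →ₗ[Λ] C) : Prop where
  inj : Function.Injective f
  surj : Function.Surjective g
  exact : LinearMap.range f = LinearMap.ker g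
  not_split : ¬ ∃ s : C →ₗ[Λ] E, g ∘ₗ s = LinearMap.id
  indecA : IsIndec Λ A
  indecC : IsIndec Λ C
  left_almost : ∀ (X : ModuleCat.{0} Λ) (h : A →ₗ[Λ] ↥X),
    (¬ ∃ r : ↥X →ₗ[Λ] A, r ∘ₗ h = LinearMap.id) → ∃ t : E →ₗ[Λ] ↥X, t ∘ₗ f = h
  right_almost : ∀ (X : ModuleCat.{0} Λ) (h : ↥X →ₗ[Λ] C),
    (¬ ∃ s : C →ₗ[Λ] ↥X, h ∘ₗ s = LinearMap.id) → ∃ t : ↥X →ₗ[Λ] E, g ∘ₗ t = h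

/-- `A` is the Auslander–Reiten translate `τ C` of `C`, witnessed by an almost split
sequence `0 → A → E → C → 0`. -/
def IsARTranslate (A C : Type) [AddCommGroup A] [Module Λ A] [AddCommGroup C] [Module Λ C] :
    Prop :=
  ∃ (E : ModuleCat.{0} Λ) (f : A →ₗ[Λ] ↥E) (g : ↥E →ₗ[Λ] C), IsAlmostSplitSeq Λ f g

/-- `M` is τ-rigid: every homomorphism `M → τ M` vanishes (vacuous if `M` is projective,
in which case `τ M = 0`). -/
def IsTauRigid (M : Type) [AddCommGroup M] [Module Λ M] : Prop :=
  ∀ (K : ModuleCat.{0} Λ), IsARTranslate Λ (↥K) M → ∀ f : M →ₗ[Λ] ↥K, f = 0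

/-- `Q` is (isomorphic to) a direct summand of `P`. -/
def IsDSummand (Q P : Type) [AddCommGroup Q] [Module Λ Q] [AddCommGroup P] [Module Λ P] :
    Prop :=
  ∃ (i : Q →ₗ[Λ] P) (r : P →ₗ[Λ] Q), r ∘ₗ i = LinearMap.id

/-- Every short exact sequence `0 → N → E → M → 0` splits, i.e. `Ext¹(M, N) = 0`. -/
def Ext1Vanishes (M N : Type) [AddCommGroup M] [Module Λ M] [AddCommGroup N] [Module Λ N] :
    Prop :=
  ∀ (E : ModuleCat.{0} Λ) (i : N →ₗ[Λ] ↥E) (p : ↥E →ₗ[Λ] M),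
    Function.Injective i → Function.Surjective p → LinearMap.range i = LinearMap.ker p →
    ∃ s : M →ₗ[Λ] ↥E, p ∘ₗ s = LinearMap.id

/-- Projective dimension at most `n`. -/
def ProjDimLE : ℕ → ModuleCat.{0} Λ → Prop
  | 0, M => Module.Projective Λ ↥M
  | n + 1, M => ∃ (P : ModuleCat.{0} Λ) (f : ↥P →ₗ[Λ] ↥M), Module.Projective Λ ↥P ∧
      Function.Surjective f ∧ ProjDimLE n (ModuleCat.of Λ (LinearMap.ker f))

/-- Injective dimension at most `n`. -/
def InjDimLE : ℕ → ModuleCat.{0} Λ → Prop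
  | 0, M => Module.Injective Λ ↥M
  | n + 1, M => ∃ (I : ModuleCat.{0} Λ) (f : ↥M →ₗ[Λ] ↥I), Module.Injective Λ ↥I ∧
      Function.Injective f ∧ InjDimLE n (ModuleCat.of Λ (↥I ⧸ LinearMap.range f))

/-- `Λ` has finite global dimension. -/
def FiniteGlobalDim : Prop :=
  ∃ n, ∀ M : ModuleCat.{0} Λ, ProjDimLE Λ n M

/-- `Λ` is hereditary: submodules of projective modules are projective. -/
def IsHereditaryAlg : Prop :=
  ∀ (P : ModuleCat.{0} Λ), Module.Projective Λ ↥P → ∀ N : Submodule Λ ↥P, Module.Projective Λ ↥N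

/-- A module is uniserial if its submodules form a chain. -/
def IsUniserial (M : Type) [AddCommGroup M] [Module Λ M] : Prop :=
  ∀ N₁ N₂ : Submodule Λ M, N₁ ≤ N₂ ∨ N₂ ≤ N₁

/-- `Λ` is a Nakayama algebra: indecomposable projective and indecomposable injective
modules are uniserial. -/
def IsNakayamaAlg : Prop :=
  ∀ M : ModuleCat.{0} Λ, IsIndec Λ ↥M →
    (Module.Projective Λ ↥M ∨ Module.Injective Λ ↥M) → IsUniserial Λ ↥M

/-- `Λ` is connected: no nontrivial central idempotents. -/
def IsConnectedAlg : Prop :=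
  ∀ e : Λ, IsIdempotentElem e → e ∈ Subring.center Λ → e = 0 ∨ e = 1

/-- `e` is a primitive idempotent. -/
def IsPrimitiveIdempotent (e : Λ) : Prop :=
  IsIdempotentElem e ∧ e ≠ 0 ∧
    ¬ ∃ e₁ e₂ : Λ, IsIdempotentElem e₁ ∧ IsIdempotentElem e₂ ∧ e₁ ≠ 0 ∧ e₂ ≠ 0 ∧
      e₁ * e₂ = 0 ∧ e₂ * e₁ = 0 ∧ e = e₁ + e₂

/-- `Λ` is basic: distinct orthogonal primitive idempotents give non-isomorphic
indecomposable projectives. -/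
def IsBasicAlg : Prop :=
  ∀ e f : Λ, IsPrimitiveIdempotent Λ e → IsPrimitiveIdempotent Λ f → e * f = 0 → f * e = 0 →
    Nonempty ((Submodule.span Λ ({e} : Set Λ)) ≃ₗ[Λ] (Submodule.span Λ ({f} : Set Λ))) → e = f

end ARPrelude


section AuxAR

variable {Λ : Type} [Ring Λ]

/-- The Jacobson radical annihilates every simple module. -/
theorem AuxAR.jac_smul_simple {S : Type} [AddCommGroup S] [Module Λ S] [IsSimpleModule Λ S]
    {a : Λ} (ha : a ∈ Ideal.jacobson (⊥ : Ideal Λ)) (x : S) : a • x = 0 := by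
  rcases eq_or_ne x 0 with rfl | hx
  · simp
  · set ψ := LinearMap.toSpanSingleton Λ S x with hψ
    have hne : ψ ≠ 0 := by
      intro h
      have : ψ 1 = 0 := by rw [h]; rfl
      simp only [hψ, LinearMap.toSpanSingleton_apply, one_smul] at this
      exact hx this
    have hsurj : Function.Surjective ψ := LinearMap.surjective_of_ne_zero hne
    have hco : IsCoatom (LinearMap.ker ψ) := LinearMap.isCoatom_ker_of_surjective hsurj
    have hmax : Ideal.IsMaximal (LinearMap.ker ψ : Ideal Λ) := Ideal.isMaximal_def.2 hco
    have hle : Ideal.jacobson (⊥ : Ideal Λ) ≤ LinearMap.ker ψ :=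
      sInf_le ⟨bot_le, hmax⟩
    have : ψ a = 0 := hle ha
    simpa [hψ, LinearMap.toSpanSingleton_apply] using this

/-- The Jacobson radical is a right ideal. -/
theorem AuxAR.jac_mul_right {a : Λ} (ha : a ∈ Ideal.jacobson (⊥ : Ideal Λ)) (c : Λ) :
    a * c ∈ Ideal.jacobson (⊥ : Ideal Λ) := by
  rw [Ideal.jacobson]
  refine Submodule.mem_sInf.2 ?_
  rintro m ⟨-, hm⟩
  haveI : IsSimpleModule Λ (Λ ⧸ m) := isSimpleModule_iff_isCoatom.2 (Ideal.isMaximal_def.1 hm)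
  have h0 : a • (Submodule.Quotient.mk c : Λ ⧸ m) = 0 := AuxAR.jac_smul_simple ha _
  rw [← Submodule.Quotient.mk_smul, Submodule.Quotient.mk_eq_zero] at h0
  simpa [smul_eq_mul] using h0

theorem AuxAR.jac_eq_finset_inf [IsArtinianRing Λ] :
    ∃ s : Finset (Ideal Λ), (∀ J ∈ s, Ideal.IsMaximal J) ∧
      Ideal.jacobson (⊥ : Ideal Λ) = s.inf id := by
  classical
  set A : Set (Ideal Λ) :=
    {I | ∃ s : Finset (Ideal Λ), (∀ J ∈ s, Ideal.IsMaximal J) ∧ I = s.inf id} with hA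
  have hne : A.Nonempty := ⟨⊤, ∅, by simp, by simp⟩
  obtain ⟨I₀, ⟨s, hs, rfl⟩, hmin⟩ := IsArtinian.set_has_minimal A hne
  refine ⟨s, hs, le_antisymm ?_ ?_⟩
  · exact Finset.le_inf fun J hJ => sInf_le ⟨bot_le, hs J hJ⟩
  · refine le_sInf ?_
    rintro J ⟨-, hJ⟩
    by_contra hle
    have hmem : (insert J s).inf id ∈ A :=
      ⟨insert J s, fun K hK => by
        rcases Finset.mem_insert.1 hK with rfl | hK
        · exact hJ
        · exact hs K hK, rfl⟩
    have hlt : (insert J s).inf id < s.inf id := by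
      rw [Finset.inf_insert]
      refine lt_of_le_of_ne inf_le_right ?_
      intro h
      exact hle (h ▸ inf_le_left : s.inf id ≤ J)
    exact hmin _ hmem hlt

theorem AuxAR.semisimple_prod {A B : Type} [AddCommGroup A] [Module Λ A] [AddCommGroup B]
    [Module Λ B] [IsSemisimpleModule Λ A] [IsSemisimpleModule Λ B] :
    IsSemisimpleModule Λ (A × B) := by
  refine isSemisimpleModule_of_isSemisimpleModule_submodule'
    (p := fun b : Bool => if b then LinearMap.range (LinearMap.inl Λ A B)
      else LinearMap.range (LinearMap.inr Λ A B)) (fun b => ?_) ?_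
  · cases b
    · simpa using IsSemisimpleModule.congr
        (LinearEquiv.ofInjective (LinearMap.inr Λ A B) LinearMap.inr_injective).symm
    · simpa using IsSemisimpleModule.congr
        (LinearEquiv.ofInjective (LinearMap.inl Λ A B) LinearMap.inl_injective).symm
  · rw [iSup_bool_eq]
    simpa using LinearMap.sup_range_inl_inr

theorem AuxAR.semisimple_quot_finset_inf (s : Finset (Ideal Λ))
    (hs : ∀ J ∈ s, Ideal.IsMaximal J) :
    IsSemisimpleModule Λ (Λ ⧸ (s.inf id : Ideal Λ)) := by
  classical
  induction s using Finset.induction_on with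
  | empty =>
      have : Subsingleton (Λ ⧸ ((∅ : Finset (Ideal Λ)).inf id : Ideal Λ)) := by
        rw [Finset.inf_empty]
        exact Submodule.Quotient.subsingleton_iff.2 rfl
      refine @IsSemisimpleModule.mk _ _ _ _ _ ⟨?_⟩
      intro a
      exact ⟨⊥, ⟨by simp, by rw [codisjoint_iff]; exact Subsingleton.elim _ _⟩⟩
  | @insert a s ha ih =>
      have hmax : Ideal.IsMaximal a := hs a (Finset.mem_insert_self a s)
      have hsimple : IsSimpleModule Λ (Λ ⧸ a) :=
        isSimpleModule_iff_isCoatom.2 (Ideal.isMaximal_def.1 hmax)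
      have hI : IsSemisimpleModule Λ (Λ ⧸ (s.inf id : Ideal Λ)) :=
        ih fun J hJ => hs J (Finset.mem_insert_of_mem hJ)
      have : IsSemisimpleModule Λ ((Λ ⧸ a) × (Λ ⧸ (s.inf id : Ideal Λ))) :=
        AuxAR.semisimple_prod
      rw [Finset.inf_insert]
      set I := s.inf id
      set χ : (Λ ⧸ (id a ⊓ I : Ideal Λ)) →ₗ[Λ] (Λ ⧸ a) × (Λ ⧸ I) :=
        Submodule.liftQ _ ((Submodule.mkQ a).prod (Submodule.mkQ I)) (by
          intro x hx
          rcases hx with ⟨h1, h2⟩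
          simp only [LinearMap.mem_ker, LinearMap.prod_apply, Function.prod, Prod.mk_eq_zero]
          constructor
          · simpa [Submodule.Quotient.mk_eq_zero] using h1
          · simpa [Submodule.Quotient.mk_eq_zero] using h2) with hχ
      have hinj : Function.Injective χ := by
        rw [← LinearMap.ker_eq_bot, eq_bot_iff]
        intro q hq
        obtain ⟨x, rfl⟩ := Submodule.mkQ_surjective _ q
        have h1 : χ (Submodule.Quotient.mk x) = 0 := hq
        rw [hχ, Submodule.liftQ_apply] at h1
        simp only [LinearMap.prod_apply, Function.prod, Prod.mk_eq_zero, Submodule.mkQ_apply,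
          Submodule.Quotient.mk_eq_zero] at h1
        simp only [Submodule.mem_bot, Submodule.mkQ_apply, Submodule.Quotient.mk_eq_zero]
        exact ⟨h1.1, h1.2⟩
      exact IsSemisimpleModule.congr (LinearEquiv.ofInjective χ hinj)

/-- Over an Artinian ring, any module killed by the Jacobson radical is semisimple. -/
theorem AuxAR.semisimple_of_jac_smul_zero [IsArtinianRing Λ]
    {M : Type} [AddCommGroup M] [Module Λ M]
    (h : ∀ a ∈ Ideal.jacobson (⊥ : Ideal Λ), ∀ x : M, a • x = 0) :
    IsSemisimpleModule Λ M := by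
  obtain ⟨s, hs, hjac⟩ := AuxAR.jac_eq_finset_inf (Λ := Λ)
  have hquot : IsSemisimpleModule Λ (Λ ⧸ (s.inf id : Ideal Λ)) :=
    AuxAR.semisimple_quot_finset_inf s hs
  refine isSemisimpleModule_of_isSemisimpleModule_submodule'
    (p := fun x : M => Submodule.span Λ {x}) (fun x => ?_) ?_
  · set ψ := LinearMap.toSpanSingleton Λ M x with hψ
    have hker : (s.inf id : Ideal Λ) ≤ LinearMap.ker ψ := by
      rw [← hjac]
      intro a ha
      simpa [hψ, LinearMap.toSpanSingleton_apply] using h a ha x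
    have e1 : ((Λ ⧸ (s.inf id : Ideal Λ)) ⧸
        (LinearMap.ker ψ).map (Submodule.mkQ (s.inf id : Ideal Λ))) ≃ₗ[Λ]
        Λ ⧸ LinearMap.ker ψ := Submodule.quotientQuotientEquivQuotient _ _ hker
    have h2 : IsSemisimpleModule Λ (Λ ⧸ LinearMap.ker ψ) :=
      IsSemisimpleModule.congr e1.symm
    have h3 : IsSemisimpleModule Λ (LinearMap.range ψ) :=
      IsSemisimpleModule.congr (ψ.quotKerEquivRange).symm
    have h4 : Submodule.span Λ {x} = LinearMap.range ψ :=
      LinearMap.span_singleton_eq_range Λ M x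
    show IsSemisimpleModule Λ (Submodule.span Λ {x})
    rw [h4]
    exact h3
  · rw [eq_top_iff]
    intro x _
    exact Submodule.mem_iSup_of_mem x (Submodule.mem_span_singleton_self x)

/-- A surjection out of a semisimple module splits. -/
theorem AuxAR.semisimple_splitting {D T : Type} [AddCommGroup D] [Module Λ D]
    [AddCommGroup T] [Module Λ T] [IsSemisimpleModule Λ D]
    (φ : D →ₗ[Λ] T) (hφ : Function.Surjective φ) :
    ∃ η : T →ₗ[Λ] D, φ ∘ₗ η = LinearMap.id := by
  obtain ⟨C, hC⟩ := exists_isCompl (LinearMap.ker φ)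
  set φ' : C →ₗ[Λ] T := φ ∘ₗ C.subtype with hφ'
  have hinj : Function.Injective φ' := by
    rw [← LinearMap.ker_eq_bot, eq_bot_iff]
    intro x hx
    have hx1 : (x : D) ∈ LinearMap.ker φ := hx
    have hx2 : (x : D) ∈ LinearMap.ker φ ⊓ C := ⟨hx1, x.2⟩
    rw [hC.inf_eq_bot] at hx2
    rw [Submodule.mem_bot] at hx2
    exact Subtype.ext hx2
  have hsurj : Function.Surjective φ' := by
    intro t
    obtain ⟨d, rfl⟩ := hφ t
    have hd : d ∈ LinearMap.ker φ ⊔ C := by rw [hC.sup_eq_top]; trivial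
    obtain ⟨k, hk, c, hc, hkc⟩ := Submodule.mem_sup.1 hd
    refine ⟨⟨c, hc⟩, ?_⟩
    have : φ k = 0 := hk
    simp only [hφ', LinearMap.comp_apply, Submodule.coe_subtype]
    rw [← hkc, map_add, this, zero_add]
  set e := LinearEquiv.ofBijective φ' ⟨hinj, hsurj⟩ with he
  refine ⟨C.subtype ∘ₗ (e.symm : T →ₗ[Λ] C), ?_⟩
  ext t
  have : φ' (e.symm t) = t := e.apply_symm_apply t
  simpa [hφ', LinearMap.comp_apply] using this

end AuxAR

set_option maxHeartbeats 2000000 in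
/-- Over an Artin algebra with radical square zero and finite global
dimension, every simple module has `Ext¹(S, S) = 0`. -/
theorem finite_gldim_simple_ext_vanishes
    (Λ : Type) [Ring Λ] [IsArtinianRing Λ] (hr2 : RadicalSquareZero Λ)
    (hgl : FiniteGlobalDim Λ) :
    ∀ (S : Type) [AddCommGroup S] [Module Λ S], IsSimpleModule Λ S →
      Ext1Vanishes Λ S S := by
  intro S _ _ hS
  haveI := hS
  intro E i p hi hp hex
  by_contra hns
  -- `S` is not projective
  have hSnp : ¬ Module.Projective Λ S := fun h =>
    hns (Module.projective_lifting_property p LinearMap.id hp)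
  obtain ⟨n, hgln⟩ := hgl
  -- basic setup: a cyclic presentation of `S`
  haveI : Nontrivial S := IsSimpleModule.nontrivial Λ S
  obtain ⟨s₀, hs₀⟩ : ∃ s₀ : S, s₀ ≠ 0 := exists_ne 0
  set ψ : Λ →ₗ[Λ] S := LinearMap.toSpanSingleton Λ S s₀ with hψdef
  have hψne : ψ ≠ 0 := by
    intro h
    have : ψ 1 = 0 := by rw [h]; rfl
    simp only [hψdef, LinearMap.toSpanSingleton_apply, one_smul] at this
    exact hs₀ this
  have hψ : Function.Surjective ψ := LinearMap.surjective_of_ne_zero hψne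
  set m : Submodule Λ Λ := LinearMap.ker ψ with hmdef
  obtain ⟨e0, he0⟩ := hp s₀
  set h : Λ →ₗ[Λ] ↥E := LinearMap.toSpanSingleton Λ ↥E e0 with hhdef
  have hph : ∀ x : Λ, p (h x) = ψ x := by
    intro x
    simp [hhdef, hψdef, LinearMap.toSpanSingleton_apply, ← he0, map_smul]
  -- the map `φ : m → S` obtained from `h` via `i`
  set i' : S ≃ₗ[Λ] LinearMap.range i := LinearEquiv.ofInjective i hi with hi'def
  have hmem : ∀ x : ↥m, h (x : Λ) ∈ LinearMap.range i := by
    intro x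
    rw [hex]
    show p (h (x : Λ)) = 0
    rw [hph]
    exact x.2
  set φ : ↥m →ₗ[Λ] S :=
    (i'.symm : LinearMap.range i →ₗ[Λ] S) ∘ₗ
      LinearMap.codRestrict (LinearMap.range i) (h ∘ₗ m.subtype) hmem with hφdef
  have hiφ : ∀ z : ↥m, i (φ z) = h (z : Λ) := by
    intro z
    have : (i' (φ z) : ↥E) = i (φ z) := rfl
    rw [← this, hφdef]
    simp only [LinearMap.comp_apply, LinearEquiv.coe_coe]
    rw [i'.apply_symm_apply]
    rfl
  -- a "projective-cover-like" submodule `P` of `Λ`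
  obtain ⟨P, hPA, hPmin⟩ := IsArtinian.set_has_minimal
    {N : Submodule Λ Λ | N ⊔ m = ⊤} ⟨⊤, by simp⟩
  set D : Submodule Λ Λ := P ⊓ m with hDdef
  have hDm : D ≤ m := inf_le_right
  have hDP : D ≤ P := inf_le_left
  set J := Ideal.jacobson (⊥ : Ideal Λ) with hJdef
  set rP : Submodule Λ Λ :=
    Submodule.span Λ {x | ∃ a ∈ J, ∃ y ∈ P, x = a * y} with hrPdef
  have hrPle : rP ≤ P := by
    rw [hrPdef, Submodule.span_le]
    rintro x ⟨a, ha, y, hy, rfl⟩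
    exact P.smul_mem a hy
  -- everything in `rP` is annihilated by `J`
  have hrP0 : ∀ x ∈ rP, ∀ a ∈ J, a * x = 0 := by
    intro x hx
    refine Submodule.span_induction ?_ ?_ ?_ ?_ hx
    · rintro z ⟨b, hb, y, hy, rfl⟩ a ha
      rw [← mul_assoc]
      rw [hr2 a ha b hb, zero_mul]
    · intro a _
      exact mul_zero a
    · intro y z _ _ hy hz a ha
      rw [mul_add, hy a ha, hz a ha, add_zero]
    · intro c z _ hz a ha
      rw [smul_eq_mul, ← mul_assoc]
      exact hz (a * c) (AuxAR.jac_mul_right ha c)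
  -- key step: D ≤ rP
  have hDrP : D ≤ rP := by
    set W : Submodule Λ ↥P := rP.comap P.subtype with hWdef
    set Dm' : Submodule Λ ↥P := D.comap P.subtype with hDm'def
    have hQt : ∀ a ∈ J, ∀ q : (↥P ⧸ W), a • q = 0 := by
      intro a ha q
      obtain ⟨x, rfl⟩ := Submodule.mkQ_surjective _ q
      rw [Submodule.mkQ_apply, ← Submodule.Quotient.mk_smul, Submodule.Quotient.mk_eq_zero]
      show ((a • x : ↥P) : Λ) ∈ rP
      have : ((a • x : ↥P) : Λ) = a * (x : Λ) := by
        simp [smul_eq_mul]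
      rw [this]
      exact Submodule.subset_span ⟨a, ha, (x : Λ), x.2, rfl⟩
    haveI := AuxAR.semisimple_of_jac_smul_zero hQt
    set Dbar : Submodule Λ (↥P ⧸ W) := Dm'.map W.mkQ with hDbardef
    obtain ⟨Cbar, hCbar⟩ := exists_isCompl Dbar
    set C : Submodule Λ ↥P := Cbar.comap W.mkQ with hCdef
    have hCD : C ⊔ Dm' = ⊤ := by
      rw [eq_top_iff]
      intro x _
      have hx : W.mkQ x ∈ Dbar ⊔ Cbar := by rw [hCbar.sup_eq_top]; trivial
      obtain ⟨d', hd', c', hc', hdc⟩ := Submodule.mem_sup.1 hx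
      obtain ⟨d, hd, rfl⟩ := hd'
      have hxd : x - d ∈ C := by
        show W.mkQ (x - d) ∈ Cbar
        rw [map_sub]
        have : W.mkQ x - W.mkQ d = c' := by rw [← hdc]; abel
        rw [this]
        exact hc'
      have : x = (x - d) + d := by abel
      rw [this]
      exact Submodule.add_mem_sup hxd hd
    set N : Submodule Λ Λ := C.map P.subtype with hNdef
    have hNP : N ≤ P := Submodule.map_subtype_le P C
    have hND : N ⊔ D = P := by
      have h1 : (C ⊔ Dm').map P.subtype = N ⊔ Dm'.map P.subtype := Submodule.map_sup _ _ _
      have h2 : Dm'.map P.subtype = D := by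
        rw [hDm'def, Submodule.map_comap_subtype, inf_eq_right.2 hDP]
      have h3 : (⊤ : Submodule Λ ↥P).map P.subtype = P := by
        rw [Submodule.map_top, Submodule.range_subtype]
      rw [← h2, ← h1, hCD, h3]
    have hNm : N ⊔ m = ⊤ := by
      have : N ⊔ m = (N ⊔ D) ⊔ m := by
        rw [sup_assoc, sup_eq_right.2 hDm]
      rw [this, hND]
      exact hPA
    have hNeqP : N = P := by
      by_contra hne
      exact hPmin N hNm (lt_of_le_of_ne hNP hne)
    have hCtop : C = ⊤ := by
      have := Submodule.map_injective_of_injective P.injective_subtype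
        (by rw [← hNdef, hNeqP, Submodule.map_top, Submodule.range_subtype] :
          C.map P.subtype = (⊤ : Submodule Λ ↥P).map P.subtype)
      exact this
    have hCbartop : Cbar = ⊤ := by
      have h1 : C.map W.mkQ = Cbar :=
        Submodule.map_comap_eq_of_surjective (Submodule.mkQ_surjective W) Cbar
      rw [← h1, hCtop, Submodule.map_top, Submodule.range_mkQ]
    have hDbarbot : Dbar = ⊥ := by
      have := hCbar.disjoint
      rw [hCbartop, disjoint_top] at this
      exact this
    intro x hx
    have hxP : x ∈ P := hDP hx
    have : (⟨x, hxP⟩ : ↥P) ∈ Dm' := hx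
    have hW : (⟨x, hxP⟩ : ↥P) ∈ W := by
      have hq : W.mkQ ⟨x, hxP⟩ ∈ Dbar := Submodule.mem_map_of_mem this
      rw [hDbarbot, Submodule.mem_bot, Submodule.mkQ_apply,
        Submodule.Quotient.mk_eq_zero] at hq
      exact hq
    exact hW
  -- case analysis on whether `h` vanishes on `D`
  by_cases hcase : ∀ x ∈ D, h x = 0
  · -- then the extension splits, contradiction
    set ψP : ↥P →ₗ[Λ] S := ψ ∘ₗ P.subtype with hψPdef
    have hψPsurj : Function.Surjective ψP := by
      intro s
      obtain ⟨x, rfl⟩ := hψ s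
      have hx : x ∈ P ⊔ m := by rw [hPA]; trivial
      obtain ⟨y, hy, z, hz, hyz⟩ := Submodule.mem_sup.1 hx
      refine ⟨⟨y, hy⟩, ?_⟩
      have hz0 : ψ z = 0 := hz
      show ψ y = ψ x
      rw [← hyz, map_add, hz0, add_zero]
    set ψbar : (↥P ⧸ LinearMap.ker ψP) →ₗ[Λ] S :=
      (LinearMap.ker ψP).liftQ ψP le_rfl with hψbardef
    have hbij : Function.Bijective ψbar := by
      constructor
      · rw [← LinearMap.ker_eq_bot, hψbardef]
        exact Submodule.ker_liftQ_eq_bot _ _ _ le_rfl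
      · intro s
        obtain ⟨x, rfl⟩ := hψPsurj s
        exact ⟨Submodule.Quotient.mk x, Submodule.liftQ_apply _ _ _⟩
    set eb := LinearEquiv.ofBijective ψbar hbij with hebdef
    have hker : LinearMap.ker ψP ≤ LinearMap.ker (h ∘ₗ P.subtype) := by
      intro x hx
      have hxm : (x : Λ) ∈ m := hx
      have hxD : (x : Λ) ∈ D := ⟨x.2, hxm⟩
      show h (x : Λ) = 0
      exact hcase _ hxD
    set hbar : (↥P ⧸ LinearMap.ker ψP) →ₗ[Λ] ↥E :=
      (LinearMap.ker ψP).liftQ (h ∘ₗ P.subtype) hker with hhbardef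
    have hcomp : ∀ q : (↥P ⧸ LinearMap.ker ψP), p (hbar q) = ψbar q := by
      intro q
      obtain ⟨x, rfl⟩ := Submodule.mkQ_surjective _ q
      rw [Submodule.mkQ_apply, hhbardef, hψbardef, Submodule.liftQ_apply,
        Submodule.liftQ_apply]
      exact hph (x : Λ)
    refine hns ⟨hbar ∘ₗ (eb.symm : S →ₗ[Λ] (↥P ⧸ LinearMap.ker ψP)), ?_⟩
    ext s
    simp only [LinearMap.comp_apply, LinearMap.id_apply, LinearEquiv.coe_coe]
    rw [hcomp]
    exact eb.apply_symm_apply s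
  · -- otherwise `S` is a direct summand of `m`
    push_neg at hcase
    obtain ⟨x₀, hx₀D, hx₀⟩ := hcase
    -- `S` is a direct summand of `m`, via `φ` and a section `etahat`
    set Dm : Submodule Λ ↥m := D.comap m.subtype with hDmdef
    haveI : IsSemisimpleModule Λ ↥Dm := by
      refine AuxAR.semisimple_of_jac_smul_zero ?_
      intro a ha x
      have hxD : ((x : ↥m) : Λ) ∈ D := x.2
      have h0 : a * ((x : ↥m) : Λ) = 0 := hrP0 _ (hDrP hxD) a ha
      apply Subtype.ext
      apply Subtype.ext
      show a • (((x : ↥m) : Λ)) = 0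
      rw [smul_eq_mul, h0]
    set φD : ↥Dm →ₗ[Λ] S := φ ∘ₗ Dm.subtype with hφDdef
    have hφDne : φD ≠ 0 := by
      intro h0
      have hx₀m : x₀ ∈ m := hDm hx₀D
      have : φD ⟨⟨x₀, hx₀m⟩, hx₀D⟩ = 0 := by rw [h0]; rfl
      have h1 : i (φ ⟨x₀, hx₀m⟩) = h x₀ := hiφ ⟨x₀, hx₀m⟩
      have h2 : φ (⟨x₀, hx₀m⟩ : ↥m) = 0 := this
      rw [h2, map_zero] at h1
      exact hx₀ h1.symm
    have hφDsurj : Function.Surjective φD := LinearMap.surjective_of_ne_zero hφDne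
    obtain ⟨η₀, hη₀⟩ := AuxAR.semisimple_splitting φD hφDsurj
    set etahat : S →ₗ[Λ] ↥m := Dm.subtype ∘ₗ η₀ with hetadef
    have hφeta : φ ∘ₗ etahat = LinearMap.id := by
      rw [hetadef, ← LinearMap.comp_assoc, ← hφDdef]
      exact hη₀
    -- the downward induction on projective dimension
    have key : ∀ k : ℕ, ∀ M : ModuleCat.{0} Λ, ProjDimLE Λ k M →
        ∀ (Q : Type) [AddCommGroup Q] [Module Λ Q], Module.Projective Λ Q →
        ∀ (σ : S →ₗ[Λ] ↥M × Q) (τ : ↥M × Q →ₗ[Λ] S), τ ∘ₗ σ = LinearMap.id → False := by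
      intro k
      induction k with
      | zero =>
          intro M hM Q _ _ hQ σ τ hτσ
          have hMp : Module.Projective Λ ↥M := hM
          haveI := hMp
          haveI := hQ
          exact hSnp (Module.Projective.of_split σ τ hτσ)
      | succ k ih =>
          intro M hM Q _ _ hQ σ τ hτσ
          obtain ⟨P₁, f, hP₁, hf, hK⟩ := hM
          haveI := hP₁
          haveI := hQ
          classical
          set X : Submodule Λ (↥M × Q) := LinearMap.ker τ with hXdef
          set F := (↥X →₀ Λ) with hFdef
          set πF : F →ₗ[Λ] ↥M × Q :=
            Finsupp.linearCombination Λ (fun v : ↥X => (v : ↥M × Q)) with hπFdef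
          have hπFX : ∀ b : F, τ (πF b) = 0 := by
            intro b
            have h1 : πF b ∈ LinearMap.range πF := ⟨b, rfl⟩
            rw [hπFdef, Finsupp.range_linearCombination] at h1
            have h2 : Submodule.span Λ (Set.range fun v : ↥X => (v : ↥M × Q)) ≤ X := by
              rw [Submodule.span_le]
              rintro z ⟨v, rfl⟩
              exact v.2
            exact h2 h1
          set θ : (Λ × F) →ₗ[Λ] ↥M × Q :=
            (σ ∘ₗ ψ) ∘ₗ LinearMap.fst Λ Λ F + πF ∘ₗ LinearMap.snd Λ Λ F with hθdef
          have hθapp : ∀ w : Λ × F, θ w = σ (ψ w.1) + πF w.2 := fun w => rfl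
          have hτσ' : ∀ z, τ (σ z) = z := fun z => congrArg (fun t => t z) hτσ
          have hτθ : ∀ w : Λ × F, τ (θ w) = ψ w.1 := by
            intro w
            rw [hθapp, map_add, hτσ', hπFX, add_zero]
          have hθsurj : Function.Surjective θ := by
            intro z
            obtain ⟨x, hx⟩ := hψ (τ z)
            have hz : z - σ (τ z) ∈ X := by
              show τ (z - σ (τ z)) = 0
              rw [map_sub, hτσ', sub_self]
            refine ⟨(x, Finsupp.single ⟨z - σ (τ z), hz⟩ 1), ?_⟩
            rw [hθapp]
            show σ (ψ x) + πF (Finsupp.single ⟨z - σ (τ z), hz⟩ 1) = z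
            rw [hπFdef, Finsupp.linearCombination_single, one_smul, hx]
            show σ (τ z) + (z - σ (τ z)) = z
            abel
          set π : (↥P₁ × Q) →ₗ[Λ] ↥M × Q := f.prodMap LinearMap.id with hπdef
          have hπapp : ∀ u : ↥P₁ × Q, π u = (f u.1, u.2) := fun u => rfl
          have hπsurj : Function.Surjective π := by
            intro z
            obtain ⟨u, hu⟩ := hf z.1
            refine ⟨(u, z.2), ?_⟩
            rw [hπapp, hu]
          set g : ((↥P₁ × Q) × (Λ × F)) →ₗ[Λ] ↥M × Q :=
            π ∘ₗ LinearMap.fst Λ _ _ - θ ∘ₗ LinearMap.snd Λ _ _ with hgdef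
          set L : Submodule Λ ((↥P₁ × Q) × (Λ × F)) := LinearMap.ker g with hLdef
          have hLmem : ∀ w : (↥P₁ × Q) × (Λ × F), (w ∈ L ↔ π w.1 = θ w.2) := by
            intro w
            rw [hLdef, LinearMap.mem_ker, hgdef]
            show π w.1 - θ w.2 = 0 ↔ π w.1 = θ w.2
            exact sub_eq_zero
          set π₁ : ↥L →ₗ[Λ] ↥P₁ × Q := LinearMap.fst Λ _ _ ∘ₗ L.subtype with hπ₁def
          set π₂ : ↥L →ₗ[Λ] Λ × F := LinearMap.snd Λ _ _ ∘ₗ L.subtype with hπ₂def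
          have hπ₁surj : Function.Surjective π₁ := by
            intro u
            obtain ⟨v, hv⟩ := hθsurj (π u)
            exact ⟨⟨(u, v), (hLmem _).2 hv.symm⟩, rfl⟩
          have hπ₂surj : Function.Surjective π₂ := by
            intro v
            obtain ⟨u, hu⟩ := hπsurj (θ v)
            exact ⟨⟨(u, v), (hLmem _).2 hu⟩, rfl⟩
          obtain ⟨s₁, hs₁⟩ := Module.projective_lifting_property π₁ LinearMap.id hπ₁surj
          obtain ⟨s₂, hs₂⟩ := Module.projective_lifting_property π₂ LinearMap.id hπ₂surj
          have hs₁' : ∀ u, π₁ (s₁ u) = u := fun u => congrArg (fun t => t u) hs₁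
          have hs₂' : ∀ v, π₂ (s₂ v) = v := fun v => congrArg (fun t => t v) hs₂
          set Kθ : Submodule Λ (Λ × F) := LinearMap.ker θ with hKθdef
          have hηθpf : ∀ s : S, θ (((etahat s : Λ), (0 : F))) = 0 := by
            intro s
            rw [hθapp]
            show σ (ψ ((etahat s : Λ))) + πF 0 = 0
            have hη : ψ ((etahat s : Λ)) = 0 := (etahat s).2
            rw [hη, map_zero, map_zero, add_zero]
          set ηθ : S →ₗ[Λ] ↥Kθ := LinearMap.codRestrict Kθ
            (LinearMap.prod (m.subtype ∘ₗ etahat) 0) (fun s => hηθpf s) with hηθdef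
          set ιL2 : ↥Kθ →ₗ[Λ] ↥L := LinearMap.codRestrict L
            (LinearMap.prod 0 Kθ.subtype) (fun v => (hLmem _).2 (by
              show π 0 = θ (v : Λ × F)
              rw [map_zero]
              exact (v.2 : θ (v : Λ × F) = 0).symm)) with hιL2def
          set g₁ : ↥L →ₗ[Λ] (↥P₁ × Q) × (Λ × F) :=
            L.subtype - L.subtype ∘ₗ s₂ ∘ₗ π₂ with hg₁def
          have hg₁app : ∀ v : ↥L, g₁ v = (v : _) - ((s₂ (π₂ v)) : _) := fun v => rfl
          have hg₁mem : ∀ v : ↥L, g₁ v ∈ L := fun v => by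
            rw [hg₁app]
            exact sub_mem v.2 (s₂ (π₂ v)).2
          have hg₁snd : ∀ v : ↥L, (g₁ v).2 = 0 := by
            intro v
            have h1 : (g₁ v).2 = π₂ v - π₂ (s₂ (π₂ v)) := rfl
            rw [h1, hs₂', sub_self]
          have hg₁fst : ∀ v : ↥L, π ((g₁ v).1) = 0 := by
            intro v
            have h1 : π ((g₁ v).1) = θ ((g₁ v).2) := (hLmem _).1 (hg₁mem v)
            rw [h1, hg₁snd, map_zero]
          have hfg₂ : ∀ v : ↥L, f ((g₁ v).1.1) = 0 := by
            intro v
            have := hg₁fst v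
            rw [hπapp] at this
            exact congrArg Prod.fst this
          have hQg₂ : ∀ v : ↥L, ((g₁ v).1.2 : Q) = 0 := by
            intro v
            have := hg₁fst v
            rw [hπapp] at this
            exact congrArg Prod.snd this
          set ρK : ↥L →ₗ[Λ] ↥(LinearMap.ker f) := LinearMap.codRestrict (LinearMap.ker f)
            (LinearMap.fst Λ ↥P₁ Q ∘ₗ LinearMap.fst Λ _ _ ∘ₗ g₁) (fun v => hfg₂ v) with hρKdef
          set ιK : ↥(LinearMap.ker f) →ₗ[Λ] ↥L := LinearMap.codRestrict L
            (LinearMap.prod (LinearMap.prod (LinearMap.ker f).subtype 0) 0)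
            (fun kk => (hLmem _).2 (by
              show π ((kk : ↥P₁), (0 : Q)) = θ 0
              rw [hπapp, map_zero]
              have : f (kk : ↥P₁) = 0 := kk.2
              rw [this]
              rfl)) with hιKdef
          have hkerθm : ∀ v : ↥Kθ, ((v : Λ × F).1) ∈ m := by
            intro v
            have hv0 : θ (v : Λ × F) = 0 := v.2
            have h1 := hτθ (v : Λ × F)
            rw [hv0, map_zero] at h1
            exact h1.symm
          set mker : ↥Kθ →ₗ[Λ] ↥m := LinearMap.codRestrict m
            (LinearMap.fst Λ Λ F ∘ₗ Kθ.subtype) (fun v => hkerθm v) with hmkerdef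
          set φθ : ↥Kθ →ₗ[Λ] S := φ ∘ₗ mker with hφθdef
          set g₃ : ↥L →ₗ[Λ] (↥P₁ × Q) × (Λ × F) :=
            L.subtype - L.subtype ∘ₗ s₁ ∘ₗ π₁ with hg₃def
          have hg₃app : ∀ v : ↥L, g₃ v = (v : _) - ((s₁ (π₁ v)) : _) := fun v => rfl
          have hg₃mem : ∀ v : ↥L, g₃ v ∈ L := fun v => by
            rw [hg₃app]
            exact sub_mem v.2 (s₁ (π₁ v)).2
          have hg₃fst : ∀ v : ↥L, (g₃ v).1 = 0 := by
            intro v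
            have h1 : (g₃ v).1 = π₁ v - π₁ (s₁ (π₁ v)) := rfl
            rw [h1, hs₁', sub_self]
          have hg₃kerθ : ∀ v : ↥L, θ ((g₃ v).2) = 0 := by
            intro v
            have h1 : π ((g₃ v).1) = θ ((g₃ v).2) := (hLmem _).1 (hg₃mem v)
            rw [hg₃fst, map_zero] at h1
            exact h1.symm
          set retS : ↥L →ₗ[Λ] S := φθ ∘ₗ LinearMap.codRestrict Kθ
            (LinearMap.snd Λ _ _ ∘ₗ g₃) (fun v => hg₃kerθ v) with hretSdef
          set σ' : S →ₗ[Λ] ↥(LinearMap.ker f) × (Λ × F) :=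
            LinearMap.prod (ρK ∘ₗ ιL2 ∘ₗ ηθ) (π₂ ∘ₗ ιL2 ∘ₗ ηθ) with hσ'def
          set τ' : ↥(LinearMap.ker f) × (Λ × F) →ₗ[Λ] S :=
            retS ∘ₗ (ιK ∘ₗ LinearMap.fst Λ _ _ + s₂ ∘ₗ LinearMap.snd Λ _ _) with hτ'def
          refine ih (ModuleCat.of Λ ↥(LinearMap.ker f)) hK (Λ × F) inferInstance σ' τ' ?_
          ext s
          set v : ↥L := ιL2 (ηθ s) with hvdef
          have hτ'σ' : τ' (σ' s) = retS (ιK (ρK v) + s₂ (π₂ v)) := rfl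
          have hA : ιK (ρK v) = v - s₂ (π₂ v) := by
            apply Subtype.ext
            have hval : ((v - s₂ (π₂ v) : ↥L) : (↥P₁ × Q) × (Λ × F)) = g₁ v := rfl
            rw [hval]
            show ((((g₁ v).1.1 : ↥P₁), (0 : Q)), (0 : Λ × F)) = g₁ v
            have h1 : ((g₁ v).1.1, (0 : Q)) = (g₁ v).1 := by
              rw [← hQg₂ v]
            rw [h1, ← hg₁snd v]
          have hB : ιK (ρK v) + s₂ (π₂ v) = v := by rw [hA]; abel
          have hπ₁v : π₁ v = 0 := rfl
          have hg₃v : g₃ v = (v : (↥P₁ × Q) × (Λ × F)) := by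
            rw [hg₃app, hπ₁v, map_zero]
            simp
          have hretSv : retS v = s := by
            have h1 : retS v = φ (mker ⟨(g₃ v).2, hg₃kerθ v⟩) := rfl
            have h2 : mker ⟨(g₃ v).2, hg₃kerθ v⟩ = etahat s := by
              apply Subtype.ext
              show ((g₃ v).2).1 = (etahat s : Λ)
              rw [hg₃v]
              rfl
            rw [h1, h2]
            exact congrArg (fun t => t s) hφeta
          show τ' (σ' s) = s
          rw [hτ'σ', hB, hretSv]
    exact key n (ModuleCat.of Λ ↥m) (hgln _) Λ inferInstance
      (LinearMap.prod etahat 0) (φ ∘ₗ LinearMap.fst Λ ↥m Λ)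
      (by
        ext s
        simp only [LinearMap.comp_apply, LinearMap.prod_apply, Pi.prod,
          LinearMap.fst_apply, LinearMap.id_apply]
        exact congrArg (fun f => f s) hφeta)
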